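/- Let s : ℝ → ℝ be differentiable with antiderivative S (S' = s), let β, ρ ∈ ℝ with ρ² = β² - 4α, and let C₁ ∈ ℝ. Then y(z) = 2 e^{-S(z)} / ((β + ρ) ∫₀^z e^{-S(t)} dt + C₁) solves the forced Duffing equation y'' + (2β y + 3s) y' + 2α y³ + 2β s y² + (2s² + s') y = 0 on any interval where the denominator is nonzero. -/

import Mathlib

theorem stmt_13 (α β ρ : ℝ) (hρ : ρ ^ 2 = β ^ 2 - 4 * α) (C₁ : ℝ)
    (s S : ℝ → ℝ) (hs : Differentiable ℝ s)
    (hS : ∀ z : ℝ, HasDerivAt S (s z) z)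
    (y : ℝ → ℝ)
    (hy : ∀ z : ℝ, y z =
      2 * Real.exp (-S z) /
        ((β + ρ) * (∫ t in (0:ℝ)..z, Real.exp (-S t)) + C₁))
    (a b : ℝ)
    (hden : ∀ z ∈ Set.Ioo a b,
      (β + ρ) * (∫ t in (0:ℝ)..z, Real.exp (-S t)) + C₁ ≠ 0) :
    ∀ z ∈ Set.Ioo a b,
      deriv (deriv y) z + (2 * β * y z + 3 * s z) * deriv y z
        + 2 * α * y z ^ 3 + 2 * β * s z * y z ^ 2
        + (2 * s z ^ 2 + deriv s z) * y z = 0 := by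
  set E : ℝ → ℝ := fun t => Real.exp (-S t) with hE
  set D : ℝ → ℝ := fun z => (β + ρ) * (∫ t in (0:ℝ)..z, E t) + C₁ with hDdef
  have hSdiff : Differentiable ℝ S := fun z => (hS z).differentiableAt
  have hEcont : Continuous E := Real.continuous_exp.comp hSdiff.continuous.neg
  have hE' : ∀ z, HasDerivAt E (-(s z) * E z) z := by
    intro z
    have := ((hS z).neg).exp
    simpa [hE, mul_comm] using this
  have hD' : ∀ z, HasDerivAt D ((β + ρ) * E z) z := by
    intro z
    have h1 : HasDerivAt (fun u => ∫ t in (0:ℝ)..u, E t) (E z) z :=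
      intervalIntegral.integral_hasDerivAt_right (hEcont.intervalIntegrable _ _)
        (hEcont.stronglyMeasurableAtFilter _ _) hEcont.continuousAt
    exact (h1.const_mul (β + ρ)).add_const C₁
  have hEpos : ∀ z, E z ≠ 0 := fun z => (Real.exp_pos _).ne'
  intro z hz
  have hDz : D z ≠ 0 := hden z hz
  have hy' : ∀ w ∈ Set.Ioo a b,
      HasDerivAt y (-(s w * y w) - (β + ρ) / 2 * y w ^ 2) w := by
    intro w hw
    have hDw : D w ≠ 0 := hden w hw
    have h1 : HasDerivAt (fun u => 2 * E u / D u)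
        ((2 * (-(s w) * E w) * D w - 2 * E w * ((β + ρ) * E w)) / D w ^ 2) w :=
      ((hE' w).const_mul 2).div (hD' w) hDw
    have hyfun : y = fun u => 2 * E u / D u := funext fun u => hy u
    rw [hyfun]
    convert h1 using 1
    beta_reduce
    field_simp
  have hdy : ∀ w ∈ Set.Ioo a b,
      deriv y w = -(s w * y w) - (β + ρ) / 2 * y w ^ 2 := fun w hw => (hy' w hw).deriv
  set v : ℝ := -(s z * y z) - (β + ρ) / 2 * y z ^ 2 with hv
  have hyz := hy' z hz
  have heq : deriv y =ᶠ[nhds z] fun w => -(s w * y w) - (β + ρ) / 2 * y w ^ 2 :=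
    Filter.eventually_of_mem (isOpen_Ioo.mem_nhds hz) fun w hw => hdy w hw
  have hg : HasDerivAt (fun w => -(s w * y w) - (β + ρ) / 2 * y w ^ 2)
      (-(deriv s z) * y z + -(s z) * v - (β + ρ) / 2 * (2 * y z * v)) z := by
    have h1 := ((hs z).hasDerivAt.neg.mul hyz)
    have h2 := (hyz.pow 2).const_mul ((β + ρ) / 2)
    convert h1.sub h2 using 1
    · rfl
    · rfl
    · funext w; simp only [Pi.sub_apply, Pi.mul_apply, Pi.neg_apply, Pi.pow_apply]; ring
    · rw [hv]; norm_num
  have hdd : deriv (deriv y) z =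
      -(deriv s z) * y z + -(s z) * v - (β + ρ) / 2 * (2 * y z * v) := by
    rw [heq.deriv_eq]; exact hg.deriv
  rw [hdd, hdy z hz, hv]
  linear_combination (y z ^ 3 / 2) * hρ
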